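/- Let X := A ∪ (∪_{n≥0} A_n) ⊂ ℝ², where A = ℝ × {0} and A_n = [4n, 4n + 2^{-n}] × {2^{-n}}, equipped with the metric induced by the ℓ₁ norm on ℝ², and let μ be the Borel measure on X that equals one-dimensional Lebesgue measure on A and 2^{-n} times one-dimensional Lebesgue measure on each A_n. Then μ is doubling at large scales: for every integer n ≥ 0 and every R ≥ 2^{-n}, for all x ∈ X and all r > R one has μ(B(x,2r)) ≤ 2^{3+n} · μ(B(x,r)) < ∞. -/

import Mathlib

open MeasureTheory Metric ENNReal Set

noncomputable section

/-- The plane `ℝ²` with the `ℓ¹` norm (so distances are `|x₁−y₁| + |x₂−y₂|`). -/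
abbrev L1Plane := WithLp 1 (ℝ × ℝ)

instance : MeasurableSpace L1Plane := borel L1Plane
instance : BorelSpace L1Plane := ⟨rfl⟩

/-- The point `(s, c)` of the `ℓ¹` plane. -/
def pt (s c : ℝ) : L1Plane := (WithLp.equiv 1 (ℝ × ℝ)).symm (s, c)

/-- The horizontal axis `A = ℝ × {0}`. -/
def lineA : Set L1Plane := {z | (WithLp.equiv 1 (ℝ × ℝ) z).2 = 0}

/-- The segment `A_n = [4n, 4n + 2^{-n}] × {2^{-n}}`. -/
def segA (n : ℕ) : Set L1Plane :=
  (fun s : ℝ => pt s ((2 : ℝ) ^ (-(n : ℤ)))) '' Icc (4 * (n : ℝ)) (4 * (n : ℝ) + 2 ^ (-(n : ℤ)))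

/-- The space `X = A ∪ ⋃_n A_n`, as a subset of the `ℓ¹` plane. -/
def Xset : Set L1Plane := lineA ∪ ⋃ n : ℕ, segA n

/-- The measure on the `ℓ¹` plane which is one-dimensional Lebesgue measure on `A` and
`2^{-n}` times one-dimensional Lebesgue measure on each `A_n`. -/
def μ₀ : Measure L1Plane :=
  (volume : Measure ℝ).map (fun s => pt s 0) +
    Measure.sum (fun n : ℕ =>
      ENNReal.ofReal ((2 : ℝ) ^ (-(n : ℤ))) •
        ((volume : Measure ℝ).restrict
            (Icc (4 * (n : ℝ)) (4 * (n : ℝ) + 2 ^ (-(n : ℤ)))) |>.map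
          (fun s => pt s ((2 : ℝ) ^ (-(n : ℤ))))))

/-- The induced measure on the subspace `X`. -/
def μX : Measure ↥Xset := μ₀.comap Subtype.val

lemma dist_pt (s c t d : ℝ) : dist (pt s c) (pt t d) = |s - t| + |c - d| := by
  rw [WithLp.prod_dist_eq_add (by norm_num)]
  simp [pt, Real.dist_eq, WithLp.toLp_fst]

lemma isometry_pt (c : ℝ) : Isometry (fun s : ℝ => pt s c) := by
  intro a b
  simp [edist_dist, dist_pt, Real.dist_eq]

lemma measurable_pt (c : ℝ) : Measurable (fun s : ℝ => pt s c) :=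
  (isometry_pt c).continuous.measurable

lemma pt_eq_self (z : L1Plane) :
    pt (WithLp.equiv 1 (ℝ × ℝ) z).1 (WithLp.equiv 1 (ℝ × ℝ) z).2 = z := rfl

lemma measurableSet_Xset : MeasurableSet Xset := by
  apply MeasurableSet.union
  · have h : LipschitzWith 1 (fun z : L1Plane => (WithLp.equiv 1 (ℝ × ℝ) z).2) := by
      apply LipschitzWith.of_dist_le_mul
      intro a b
      rw [NNReal.coe_one, one_mul]
      conv_rhs => rw [← pt_eq_self a, ← pt_eq_self b]
      rw [dist_pt, Real.dist_eq]
      have := abs_nonneg ((WithLp.equiv 1 (ℝ × ℝ) a).1 - (WithLp.equiv 1 (ℝ × ℝ) b).1)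
      linarith
    exact (isClosed_eq h.continuous continuous_const).measurableSet
  · exact MeasurableSet.iUnion (fun n =>
      (isCompact_Icc.image (isometry_pt _).continuous).isClosed.measurableSet)

lemma μ₀_apply {S : Set L1Plane} (hS : MeasurableSet S) :
    μ₀ S = volume ((fun s : ℝ => pt s 0) ⁻¹' S) +
      ∑' n : ℕ, ENNReal.ofReal ((2:ℝ) ^ (-(n:ℤ))) *
        volume (((fun s : ℝ => pt s ((2:ℝ)^(-(n:ℤ)))) ⁻¹' S) ∩
          Icc (4*(n:ℝ)) (4*(n:ℝ) + 2 ^ (-(n:ℤ)))) := by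
  unfold μ₀
  rw [Measure.add_apply, Measure.map_apply (measurable_pt 0) hS, Measure.sum_apply _ hS]
  congr 1
  apply tsum_congr
  intro n
  rw [Measure.smul_apply, Measure.map_apply (measurable_pt _) hS,
      Measure.restrict_apply ((measurable_pt _) hS), smul_eq_mul]

lemma μ₀_compl_Xset : μ₀ Xsetᶜ = 0 := by
  rw [μ₀_apply measurableSet_Xset.compl]
  have h1 : (fun s : ℝ => pt s 0) ⁻¹' Xsetᶜ = ∅ := by
    ext s
    simp only [mem_preimage, mem_compl_iff, mem_empty_iff_false, iff_false, not_not]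
    exact Or.inl rfl
  have h2 : ∀ n : ℕ, ((fun s : ℝ => pt s ((2:ℝ)^(-(n:ℤ)))) ⁻¹' Xsetᶜ) ∩
      Icc (4*(n:ℝ)) (4*(n:ℝ) + 2 ^ (-(n:ℤ))) = ∅ := by
    intro n
    ext s
    simp only [mem_inter_iff, mem_preimage, mem_compl_iff, mem_empty_iff_false, iff_false,
      not_and]
    intro h hs
    exact h (Or.inr (mem_iUnion.2 ⟨n, mem_image_of_mem _ hs⟩))
  rw [h1, measure_empty, zero_add, ENNReal.tsum_eq_zero]
  intro n
  rw [h2 n, measure_empty, mul_zero]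

lemma μX_ball (x : ↥Xset) (r : ℝ) : μX (ball x r) = μ₀ (Metric.ball (x : L1Plane) r) := by
  rw [μX, MeasurableEmbedding.comap_apply (MeasurableEmbedding.subtype_coe measurableSet_Xset)]
  have hb : ball x r = Subtype.val ⁻¹' Metric.ball (x : L1Plane) r := by
    ext y
    simp [Metric.mem_ball, Subtype.dist_eq]
  rw [hb, Subtype.image_preimage_coe, inter_comm, measure_inter_conull μ₀_compl_Xset]

lemma preimage_pt_ball (c a b r : ℝ) :
    (fun s : ℝ => pt s c) ⁻¹' Metric.ball (pt a b) r = {s : ℝ | |s - a| + |c - b| < r} := by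
  ext s
  simp [Metric.mem_ball, dist_pt]

lemma μ₀_ball (a b r : ℝ) :
    μ₀ (Metric.ball (pt a b) r) = volume {s : ℝ | |s - a| + |0 - b| < r} +
      ∑' n : ℕ, ENNReal.ofReal ((2:ℝ) ^ (-(n:ℤ))) *
        volume ({s : ℝ | |s - a| + |(2:ℝ)^(-(n:ℤ)) - b| < r} ∩
          Icc (4*(n:ℝ)) (4*(n:ℝ) + 2 ^ (-(n:ℤ)))) := by
  rw [μ₀_apply measurableSet_ball]
  simp_rw [preimage_pt_ball]

lemma vol_strip_le (a e r : ℝ) (he : 0 ≤ e) :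
    volume {s : ℝ | |s - a| + e < r} ≤ ENNReal.ofReal (2 * r) := by
  have hsub : {s : ℝ | |s - a| + e < r} ⊆ Ioo (a - r) (a + r) := by
    intro s hs
    simp only [mem_setOf_eq] at hs
    have h1 : |s - a| < r := by linarith
    rw [abs_lt] at h1
    constructor <;> [linarith; linarith]
  calc volume {s : ℝ | |s - a| + e < r} ≤ volume (Ioo (a - r) (a + r)) := measure_mono hsub
    _ = ENNReal.ofReal (2 * r) := by rw [Real.volume_Ioo]; congr 1; ring

lemma vol_strip_ge (a e r : ℝ) (he : 0 ≤ e) :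
    ENNReal.ofReal (2 * (r - e)) ≤ volume {s : ℝ | |s - a| + e < r} := by
  have hsub : Ioo (a - (r - e)) (a + (r - e)) ⊆ {s : ℝ | |s - a| + e < r} := by
    intro s hs
    simp only [mem_Ioo] at hs
    simp only [mem_setOf_eq]
    have h1 : |s - a| < r - e := abs_lt.2 ⟨by linarith, by linarith⟩
    linarith
  calc ENNReal.ofReal (2 * (r - e)) = volume (Ioo (a - (r - e)) (a + (r - e))) := by
        rw [Real.volume_Ioo]; congr 1; ring
    _ ≤ _ := measure_mono hsub

lemma vol_seg_ge (c L a r : ℝ) (hca : c ≤ a) (hac : a ≤ c + L) (hr : 0 < r) (hL : 0 < L) :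
    ENNReal.ofReal (min r L) ≤ volume ({s : ℝ | |s - a| < r} ∩ Icc c (c + L)) := by
  have hsub : Ioo (max c (a - r)) (min (c + L) (a + r)) ⊆
      {s : ℝ | |s - a| < r} ∩ Icc c (c + L) := by
    intro s hs
    simp only [mem_Ioo, lt_min_iff, max_lt_iff] at hs
    obtain ⟨⟨h1, h2⟩, h3, h4⟩ := hs
    constructor
    · show |s - a| < r
      rw [abs_lt]
      constructor <;> linarith
    · exact ⟨le_of_lt h1, le_of_lt h3⟩
  refine le_trans ?_ (measure_mono hsub)
  rw [Real.volume_Ioo]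
  apply ENNReal.ofReal_le_ofReal
  rcases le_total r L with h | h
  · rw [min_eq_left h]
    rcases le_total (c + L) (a + r) with h' | h' <;> rcases le_total c (a - r) with h'' | h'' <;>
      simp [min_eq_left, min_eq_right, max_eq_left, max_eq_right, h', h''] <;> linarith
  · rw [min_eq_right h]
    rcases le_total (c + L) (a + r) with h' | h' <;> rcases le_total c (a - r) with h'' | h'' <;>
      simp [min_eq_left, min_eq_right, max_eq_left, max_eq_right, h', h''] <;> linarith

lemma tsum_quarter_le : (∑' n : ℕ, ENNReal.ofReal ((2:ℝ)^(-(n:ℤ))) * ENNReal.ofReal ((2:ℝ)^(-(n:ℤ))))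
    ≤ ENNReal.ofReal (4/3) := by
  have h : ∀ n : ℕ, ENNReal.ofReal ((2:ℝ)^(-(n:ℤ))) * ENNReal.ofReal ((2:ℝ)^(-(n:ℤ)))
      = ENNReal.ofReal ((1/4:ℝ)^n) := by
    intro n
    rw [← ENNReal.ofReal_mul (by positivity)]
    congr 1
    rw [zpow_neg, zpow_natCast, ← mul_inv, ← mul_pow, one_div, inv_pow]
    norm_num
  rw [tsum_congr h, ← ENNReal.ofReal_tsum_of_nonneg (fun n => by positivity)
    (summable_geometric_of_lt_one (by norm_num) (by norm_num))]
  apply ENNReal.ofReal_le_ofReal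
  rw [tsum_geometric_of_lt_one (by norm_num) (by norm_num)]
  norm_num

lemma two_zpow_pos (n : ℕ) : (0:ℝ) < 2 ^ (-(n:ℤ)) := by positivity

lemma two_zpow_le_one (n : ℕ) : (2:ℝ) ^ (-(n:ℤ)) ≤ 1 := by
  rw [zpow_neg, zpow_natCast]
  rw [inv_le_one₀ (by positivity)]
  exact one_le_pow₀ (by norm_num)

lemma upper_all (a b r : ℝ) :
    μ₀ (Metric.ball (pt a b) r) ≤ ENNReal.ofReal (2*r) + ENNReal.ofReal (4/3) := by
  rw [μ₀_ball]
  apply add_le_add (vol_strip_le _ _ _ (abs_nonneg _))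
  refine le_trans (ENNReal.tsum_le_tsum fun n => ?_) tsum_quarter_le
  apply mul_le_mul_right
  calc volume _ ≤ volume (Icc (4*(n:ℝ)) (4*(n:ℝ) + 2 ^ (-(n:ℤ)))) :=
        measure_mono inter_subset_right
    _ = ENNReal.ofReal ((2:ℝ) ^ (-(n:ℤ))) := by rw [Real.volume_Icc]; congr 1; ring

lemma upper_one (a r : ℝ) (m : ℕ) (hr3 : r ≤ 3)
    (ha : a ∈ Icc (4*(m:ℝ)) (4*(m:ℝ) + 2 ^ (-(m:ℤ)))) :
    μ₀ (Metric.ball (pt a ((2:ℝ)^(-(m:ℤ)))) r) ≤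
      ENNReal.ofReal (2*r) + ENNReal.ofReal ((2:ℝ)^(-(m:ℤ))) *
        min (ENNReal.ofReal (2*r)) (ENNReal.ofReal ((2:ℝ)^(-(m:ℤ)))) := by
  obtain ⟨ha1, ha2⟩ := ha
  rw [μ₀_ball]
  apply add_le_add (vol_strip_le _ _ _ (abs_nonneg _))
  have hvanish : ∀ k : ℕ, k ≠ m →
      ENNReal.ofReal ((2:ℝ) ^ (-(k:ℤ))) *
        volume ({s : ℝ | |s - a| + |(2:ℝ)^(-(k:ℤ)) - (2:ℝ)^(-(m:ℤ))| < r} ∩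
          Icc (4*(k:ℝ)) (4*(k:ℝ) + 2 ^ (-(k:ℤ)))) = 0 := by
    intro k hkm
    have hempty : {s : ℝ | |s - a| + |(2:ℝ)^(-(k:ℤ)) - (2:ℝ)^(-(m:ℤ))| < r} ∩
        Icc (4*(k:ℝ)) (4*(k:ℝ) + 2 ^ (-(k:ℤ))) = ∅ := by
      rw [eq_empty_iff_forall_notMem]
      rintro s ⟨h1, h2, h3⟩
      simp only [mem_setOf_eq] at h1
      have hk1 : (2:ℝ) ^ (-(k:ℤ)) ≤ 1 := two_zpow_le_one k
      have hm1 : (2:ℝ) ^ (-(m:ℤ)) ≤ 1 := two_zpow_le_one m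
      have hk0 : (0:ℝ) < 2 ^ (-(k:ℤ)) := two_zpow_pos k
      have hm0 : (0:ℝ) < 2 ^ (-(m:ℤ)) := two_zpow_pos m
      rcases lt_or_gt_of_ne hkm with hlt | hgt
      · have hc : ((k:ℝ) + 1) ≤ (m:ℝ) := by exact_mod_cast Nat.succ_le_of_lt hlt
        have habs : a - s ≤ |s - a| := by rw [abs_sub_comm]; exact le_abs_self _
        have habs2 : (2:ℝ)^(-(k:ℤ)) - (2:ℝ)^(-(m:ℤ)) ≤ |(2:ℝ)^(-(k:ℤ)) - (2:ℝ)^(-(m:ℤ))| :=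
          le_abs_self _
        linarith
      · have hc : ((m:ℝ) + 1) ≤ (k:ℝ) := by exact_mod_cast Nat.succ_le_of_lt hgt
        have habs : s - a ≤ |s - a| := le_abs_self _
        have habs2 : (0:ℝ) ≤ |(2:ℝ)^(-(k:ℤ)) - (2:ℝ)^(-(m:ℤ))| := abs_nonneg _
        linarith
    rw [hempty, measure_empty, mul_zero]
  rw [tsum_eq_single m hvanish]
  apply mul_le_mul_right
  apply le_min
  · exact le_trans (measure_mono inter_subset_left) (vol_strip_le _ _ _ (abs_nonneg _))
  · calc volume _ ≤ volume (Icc (4*(m:ℝ)) (4*(m:ℝ) + 2 ^ (-(m:ℤ)))) :=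
        measure_mono inter_subset_right
      _ = ENNReal.ofReal ((2:ℝ) ^ (-(m:ℤ))) := by rw [Real.volume_Icc]; congr 1; ring

lemma lower_line (a b r : ℝ) :
    ENNReal.ofReal (2*(r - |b|)) ≤ μ₀ (Metric.ball (pt a b) r) := by
  rw [μ₀_ball]
  refine le_trans ?_ le_self_add
  have h : |(0:ℝ) - b| = |b| := by rw [zero_sub, abs_neg]
  refine le_trans (le_of_eq ?_) (vol_strip_ge a |0 - b| r (abs_nonneg _))
  rw [h]

lemma lower_seg_full (a r : ℝ) (m : ℕ) (hr : 0 < r)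
    (ha : a ∈ Icc (4*(m:ℝ)) (4*(m:ℝ) + 2 ^ (-(m:ℤ)))) :
    ENNReal.ofReal (2*(r - (2:ℝ)^(-(m:ℤ)))) +
      ENNReal.ofReal ((2:ℝ)^(-(m:ℤ))) * ENNReal.ofReal (min r ((2:ℝ)^(-(m:ℤ))))
      ≤ μ₀ (Metric.ball (pt a ((2:ℝ)^(-(m:ℤ)))) r) := by
  rw [μ₀_ball]
  apply add_le_add
  · refine le_trans (le_of_eq ?_) (vol_strip_ge a |0 - (2:ℝ)^(-(m:ℤ))| r (abs_nonneg _))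
    rw [zero_sub, abs_neg, abs_of_pos (two_zpow_pos m)]
  · refine le_trans ?_ (ENNReal.le_tsum m)
    apply mul_le_mul_right
    have hset : {s : ℝ | |s - a| + |(2:ℝ)^(-(m:ℤ)) - (2:ℝ)^(-(m:ℤ))| < r}
        = {s : ℝ | |s - a| < r} := by simp
    rw [hset]
    have := vol_seg_ge (4*(m:ℝ)) ((2:ℝ)^(-(m:ℤ))) a r ha.1 ha.2 hr (two_zpow_pos m)
    exact this

lemma coords_of_mem {z : L1Plane} (hz : z ∈ Xset) :
    (WithLp.equiv 1 (ℝ × ℝ) z).2 = 0 ∨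
    ∃ m : ℕ, (WithLp.equiv 1 (ℝ × ℝ) z).2 = (2:ℝ)^(-(m:ℤ)) ∧
      (WithLp.equiv 1 (ℝ × ℝ) z).1 ∈ Icc (4*(m:ℝ)) (4*(m:ℝ) + 2^(-(m:ℤ))) := by
  rcases hz with h | h
  · exact Or.inl h
  · rw [mem_iUnion] at h
    obtain ⟨m, s, hs, rfl⟩ := h
    exact Or.inr ⟨m, rfl, hs⟩

/-- On the space `X = A ∪ ⋃_n A_n` of Example 13 (with the `ℓ¹` metric and the measure that is
Lebesgue on `A` and `2^{-n}`·Lebesgue on `A_n`), the measure is doubling at large scales: for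
every `n` and every `R ≥ 2^{-n}`, for all `x ∈ X` and all radii `r > R`,
`μ(B(x,2r)) ≤ 2^{3+n} μ(B(x,r)) < ∞`. -/
theorem example_doubling_at_large_scales :
    ∀ n : ℕ, ∀ R : ℝ, (2 : ℝ) ^ (-(n : ℤ)) ≤ R →
      ∀ x : ↥Xset, ∀ r : ℝ, R < r →
        μX (ball x (2 * r)) ≤ (2 : ℝ≥0∞) ^ (3 + n) * μX (ball x r) ∧
        μX (ball x r) < ∞ := by
  intro n R hR x r hr
  have hc0 : (0:ℝ) < 2 ^ (-(n:ℤ)) := two_zpow_pos n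
  have hcr : (2:ℝ) ^ (-(n:ℤ)) < r := lt_of_le_of_lt hR hr
  have hr0 : (0:ℝ) < r := hc0.trans hcr
  set K : ℝ := (2:ℝ)^(3+n) with hKdef
  have hK0 : (0:ℝ) < K := by positivity
  have hKc : K * 2 ^ (-(n:ℤ)) = 8 := by
    rw [hKdef, pow_add, mul_assoc, ← zpow_natCast (2:ℝ) n, ← zpow_add₀ (two_ne_zero),
      add_neg_cancel, zpow_zero, mul_one]
    norm_num
  have hK8 : (8:ℝ) ≤ K := by nlinarith [two_zpow_le_one n]
  have hKr : (8:ℝ) < K * r := by nlinarith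
  have hKEC : (2:ℝ≥0∞)^(3+n) = ENNReal.ofReal K := by
    rw [hKdef, ENNReal.ofReal_pow (by norm_num : (0:ℝ) ≤ 2), ENNReal.ofReal_ofNat]
  have hmem := coords_of_mem x.2
  set a := (WithLp.equiv 1 (ℝ × ℝ) (x:L1Plane)).1 with hadef
  set b := (WithLp.equiv 1 (ℝ × ℝ) (x:L1Plane)).2 with hbdef
  have hfin : μX (ball x r) < ∞ := by
    rw [μX_ball]
    calc μ₀ (Metric.ball (x:L1Plane) r) ≤ ENNReal.ofReal (2*r) + ENNReal.ofReal (4/3) :=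
          upper_all a b r
      _ < ∞ := by finiteness
  refine ⟨?_, hfin⟩
  rw [μX_ball x (2*r), μX_ball x r, hKEC]
  rcases hmem with hb0 | ⟨m, hbm, ham⟩
  · -- x on the line
    have h8r : 8*r ≤ K*r := by nlinarith
    calc μ₀ (Metric.ball (x:L1Plane) (2*r))
        ≤ ENNReal.ofReal (2*(2*r)) + ENNReal.ofReal (4/3) := upper_all a b (2*r)
      _ = ENNReal.ofReal (2*(2*r) + 4/3) := by
          rw [← ENNReal.ofReal_add (by positivity) (by norm_num)]
      _ ≤ ENNReal.ofReal (K * (2*(r - |b|))) := by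
          apply ENNReal.ofReal_le_ofReal
          rw [hb0, abs_zero]
          nlinarith
      _ = ENNReal.ofReal K * ENNReal.ofReal (2*(r - |b|)) := ENNReal.ofReal_mul hK0.le
      _ ≤ ENNReal.ofReal K * μ₀ (Metric.ball (x:L1Plane) r) :=
          mul_le_mul_right (lower_line a b r) _
  · -- x on a segment
    have hb0' : (0:ℝ) < b := hbm ▸ two_zpow_pos m
    have hb1 : b ≤ 1 := hbm ▸ two_zpow_le_one m
    have hlow : ENNReal.ofReal (2*(r - b)) +
        ENNReal.ofReal b * ENNReal.ofReal (min r b) ≤ μ₀ (Metric.ball (x:L1Plane) r) := by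
      have h := lower_seg_full a r m hr0 ham
      rw [← hbm] at h
      exact h
    rcases le_or_gt r b with hrb | hbr
    · -- r ≤ b : small radius, only the segment matters
      have hub := upper_one a (2*r) m (by linarith) ham
      rw [← hbm] at hub
      calc μ₀ (Metric.ball (x:L1Plane) (2*r))
          ≤ ENNReal.ofReal (2*(2*r)) + ENNReal.ofReal b *
              min (ENNReal.ofReal (2*(2*r))) (ENNReal.ofReal b) := hub
        _ ≤ ENNReal.ofReal (2*(2*r)) + ENNReal.ofReal b * ENNReal.ofReal (2*(2*r)) := by
            gcongr
            exact min_le_left _ _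
        _ = ENNReal.ofReal (2*(2*r) + b * (2*(2*r))) := by
            rw [← ENNReal.ofReal_mul hb0'.le, ← ENNReal.ofReal_add (by positivity) (by positivity)]
        _ ≤ ENNReal.ofReal (K * (b * r)) := by
            apply ENNReal.ofReal_le_ofReal
            nlinarith [mul_lt_mul_of_pos_right hKr hb0', mul_le_mul_of_nonneg_right hrb hb0'.le,
              mul_pos hb0' hr0]
        _ = ENNReal.ofReal K * (ENNReal.ofReal b * ENNReal.ofReal r) := by
            rw [ENNReal.ofReal_mul hK0.le, ENNReal.ofReal_mul hb0'.le]
        _ ≤ ENNReal.ofReal K * μ₀ (Metric.ball (x:L1Plane) r) := by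
            apply mul_le_mul_right
            refine le_trans ?_ hlow
            refine le_trans (le_of_eq ?_) le_add_self
            rw [min_eq_left hrb]
    · rcases le_or_gt r 1 with hr1 | h1r
      · -- b < r ≤ 1
        have hub := upper_one a (2*r) m (by linarith) ham
        rw [← hbm] at hub
        calc μ₀ (Metric.ball (x:L1Plane) (2*r))
            ≤ ENNReal.ofReal (2*(2*r)) + ENNReal.ofReal b *
                min (ENNReal.ofReal (2*(2*r))) (ENNReal.ofReal b) := hub
          _ ≤ ENNReal.ofReal (2*(2*r)) + ENNReal.ofReal b * ENNReal.ofReal b := by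
              gcongr
              exact min_le_right _ _
          _ = ENNReal.ofReal (2*(2*r) + b * b) := by
              rw [← ENNReal.ofReal_mul hb0'.le, ← ENNReal.ofReal_add (by positivity) (by positivity)]
          _ ≤ ENNReal.ofReal (K * (2*(r - b) + b * min r b)) := by
              apply ENNReal.ofReal_le_ofReal
              rw [min_eq_right hbr.le]
              nlinarith [mul_lt_mul_of_pos_right hKr hr0,
                mul_nonneg (mul_nonneg (sub_nonneg.2 hbr.le) (by linarith : (0:ℝ) ≤ 2 - r - b)) hK0.le,
                mul_pos hr0 hr0, mul_pos hb0' hb0']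
          _ = ENNReal.ofReal K * (ENNReal.ofReal (2*(r - b)) +
                ENNReal.ofReal b * ENNReal.ofReal (min r b)) := by
              rw [ENNReal.ofReal_mul hK0.le, ENNReal.ofReal_add (by nlinarith) ?_,
                ENNReal.ofReal_mul hb0'.le]
              positivity
          _ ≤ ENNReal.ofReal K * μ₀ (Metric.ball (x:L1Plane) r) := mul_le_mul_right hlow _
      · -- b < r, 1 < r
        calc μ₀ (Metric.ball (x:L1Plane) (2*r))
            ≤ ENNReal.ofReal (2*(2*r)) + ENNReal.ofReal (4/3) := upper_all a b (2*r)
          _ = ENNReal.ofReal (2*(2*r) + 4/3) := by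
              rw [← ENNReal.ofReal_add (by positivity) (by norm_num)]
          _ ≤ ENNReal.ofReal (K * (2*(r - b) + b * min r b)) := by
              apply ENNReal.ofReal_le_ofReal
              rw [min_eq_right hbr.le]
              nlinarith [sq_nonneg (b - 1),
                mul_nonneg (by linarith : (0:ℝ) ≤ K - 8)
                  (by nlinarith : (0:ℝ) ≤ 2*(r - b) + b * b)]
          _ = ENNReal.ofReal K * (ENNReal.ofReal (2*(r - b)) +
                ENNReal.ofReal b * ENNReal.ofReal (min r b)) := by
              rw [ENNReal.ofReal_mul hK0.le, ENNReal.ofReal_add (by nlinarith) ?_,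
                ENNReal.ofReal_mul hb0'.le]
              positivity
          _ ≤ ENNReal.ofReal K * μ₀ (Metric.ball (x:L1Plane) r) := mul_le_mul_right hlow _

end
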